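/- Fix n ≥ 2, let G be a graph, ω a placement function on G, and f : V(G) → V(C) satisfying (C1) and (C2). Let u_0,…,u_{k₁} and v_0,…,v_{k₂} be wrapping patterns in G. Suppose p₁ ∈ {1,…,k₁−1} and p₂ ∈ {1,…,k₂−1} are odd and f(u_{p₁}) = f(v_{p₂}) ≠ C(·,0). Then f(u_{p₁−1}) = f(v_{p₂−1}) and f(u_{p₁+1}) = f(v_{p₂+1}). -/

import Mathlib

/-- Vertices of the infinite n-od graph `C`: a branch vertex, and nodes `C(ℓ,j)`
(intended for `1 ≤ ℓ ≤ n`, `j ≥ 1`). -/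
inductive NOdVert : Type where
  | branch : NOdVert
  | node : ℕ → ℕ → NOdVert
deriving DecidableEq

/-- `cv ℓ j` denotes the vertex `C(ℓ,j)`, where `C(ℓ,0)` is the branch vertex. -/
def cv (ℓ j : ℕ) : NOdVert := if j = 0 then NOdVert.branch else NOdVert.node ℓ j

/-- Adjacency in the infinite n-od `C`: `C(ℓ,j)` is adjacent to `C(ℓ,j+1)` for
`1 ≤ ℓ ≤ n` and `j ≥ 0` (the case `j = 0` gives branch–`C(ℓ,1)` edges). -/
def nodAdj (n : ℕ) (u v : NOdVert) : Prop :=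
  ∃ ℓ j, 1 ≤ ℓ ∧ ℓ ≤ n ∧
    ((u = cv ℓ j ∧ v = cv ℓ (j + 1)) ∨ (v = cv ℓ j ∧ u = cv ℓ (j + 1)))

/-- The point `b(i,t) = ((1+t)cos(iπ/n), (1+t)sin(iπ/n))` in the plane. -/
noncomputable def bpt (n i : ℕ) (t : ℝ) : ℝ × ℝ :=
  ((1 + t) * Real.cos (i * Real.pi / n), (1 + t) * Real.sin (i * Real.pi / n))

/-- The origin `o` of the plane. -/
def origin : ℝ × ℝ := (0, 0)

/-- A placement function: on each edge of `G`, one endpoint maps to `o` and the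
other to some `b(i,t)` with `i ∈ {0,…,n}`, `t ∈ [0,1]`. -/
def IsPlacement {V : Type*} (n : ℕ) (G : SimpleGraph V) (ω : V → ℝ × ℝ) : Prop :=
  ∀ u v, G.Adj u v →
    (ω u = origin ∧ ∃ i ≤ n, ∃ t ∈ Set.Icc (0 : ℝ) 1, ω v = bpt n i t) ∨
    (ω v = origin ∧ ∃ i ≤ n, ∃ t ∈ Set.Icc (0 : ℝ) 1, ω u = bpt n i t)

/-- Condition (C1). -/
def CondC1 {V : Type*} (n : ℕ) (ω : V → ℝ × ℝ) (f : V → NOdVert) : Prop :=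
  ∀ u v, f u = f v →
    (ω u = origin ∧ ω v = origin) ∨
    ∃ i ≤ n, ∃ s ∈ Set.Icc (0 : ℝ) 1, ∃ t ∈ Set.Icc (0 : ℝ) 1,
      ω u = bpt n i s ∧ ω v = bpt n i t

/-- Condition (C2): `f` maps adjacent vertices of `G` to adjacent vertices of `C`. -/
def CondC2 {V : Type*} (n : ℕ) (G : SimpleGraph V) (f : V → NOdVert) : Prop :=
  ∀ u v, G.Adj u v → nodAdj n (f u) (f v)

/-- `w 0, …, w k` is a wrapping pattern in `G` for the placement function `ω`. -/
def IsWrapping {V : Type*} (n : ℕ) (G : SimpleGraph V) (ω : V → ℝ × ℝ)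
    (w : ℕ → V) (k : ℕ) : Prop :=
  0 < k ∧ 2 * (n + 1) ∣ k ∧
  (∀ p < k, G.Adj (w p) (w (p + 1))) ∧
  (∀ q, 2 * q ≤ k → ∃ t ∈ Set.Icc (0 : ℝ) 1, ω (w (2 * q)) = bpt n (q % (n + 1)) t) ∧
  (∀ q, 2 * q + 1 ≤ k → ω (w (2 * q + 1)) = origin)

/-- The branch-star of `C`: the branch vertex together with `C(ℓ,1)`, `1 ≤ ℓ ≤ n`. -/
def branchStar (n : ℕ) : Set NOdVert :=
  {NOdVert.branch} ∪ {x | ∃ ℓ, 1 ≤ ℓ ∧ ℓ ≤ n ∧ x = NOdVert.node ℓ 1}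

lemma bpt_ne_origin {n i : ℕ} {t : ℝ} (ht : 0 ≤ t) : bpt n i t ≠ origin := by
  intro h
  have h1 : (1 + t) * Real.cos ((i : ℝ) * Real.pi / n) = 0 := congrArg Prod.fst h
  have h2 : (1 + t) * Real.sin ((i : ℝ) * Real.pi / n) = 0 := congrArg Prod.snd h
  have ht1 : (0 : ℝ) < 1 + t := by linarith
  have hc : Real.cos ((i : ℝ) * Real.pi / n) = 0 :=
    (mul_eq_zero.mp h1).resolve_left ht1.ne'
  have hs : Real.sin ((i : ℝ) * Real.pi / n) = 0 :=
    (mul_eq_zero.mp h2).resolve_left ht1.ne'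
  have := Real.sin_sq_add_cos_sq ((i : ℝ) * Real.pi / n)
  rw [hc, hs] at this
  norm_num at this

lemma bpt_index_eq {n i i' : ℕ} (hn : 1 ≤ n) (hi : i ≤ n) (hi' : i' ≤ n)
    {s t : ℝ} (hs : 0 ≤ s) (ht : 0 ≤ t) (h : bpt n i s = bpt n i' t) : i = i' := by
  have hn0 : (n : ℝ) ≠ 0 := Nat.cast_ne_zero.mpr (by omega)
  set θ := (i : ℝ) * Real.pi / n with hθ
  set θ' := (i' : ℝ) * Real.pi / n with hθ'
  have h1 : (1 + s) * Real.cos θ = (1 + t) * Real.cos θ' := congrArg Prod.fst h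
  have h2 : (1 + s) * Real.sin θ = (1 + t) * Real.sin θ' := congrArg Prod.snd h
  have a := Real.sin_sq_add_cos_sq θ
  have b := Real.sin_sq_add_cos_sq θ'
  have hs1 : (0 : ℝ) < 1 + s := by linarith
  have ht1 : (0 : ℝ) < 1 + t := by linarith
  have hsq : (1 + s) ^ 2 = (1 + t) ^ 2 := by
    calc (1 + s) ^ 2 = ((1 + s) * Real.sin θ) ^ 2 + ((1 + s) * Real.cos θ) ^ 2 := by
          rw [mul_pow, mul_pow, ← mul_add, a, mul_one]
      _ = ((1 + t) * Real.sin θ') ^ 2 + ((1 + t) * Real.cos θ') ^ 2 := by rw [h1, h2]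
      _ = (1 + t) ^ 2 := by rw [mul_pow, mul_pow, ← mul_add, b, mul_one]
  have hst : (1 : ℝ) + s = 1 + t := by nlinarith
  rw [hst] at h1
  have hcos : Real.cos θ = Real.cos θ' := mul_left_cancel₀ ht1.ne' h1
  have hnpos : (0 : ℝ) < n := by positivity
  have hmemθ : θ ∈ Set.Icc 0 Real.pi := by
    constructor
    · apply div_nonneg (by positivity) hnpos.le
    · rw [div_le_iff₀ hnpos]
      have : (i : ℝ) ≤ n := Nat.cast_le.mpr hi
      nlinarith [Real.pi_pos]
  have hmemθ' : θ' ∈ Set.Icc 0 Real.pi := by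
    constructor
    · apply div_nonneg (by positivity) hnpos.le
    · rw [div_le_iff₀ hnpos]
      have : (i' : ℝ) ≤ n := Nat.cast_le.mpr hi'
      nlinarith [Real.pi_pos]
  have hθeq : θ = θ' := Real.injOn_cos hmemθ hmemθ' hcos
  rw [hθ, hθ'] at hθeq
  have : (i : ℝ) = (i' : ℝ) := by
    rcases mul_eq_mul_right_iff.mp ((div_left_inj' hn0).mp hθeq) with h | h
    · exact_mod_cast h
    · exact absurd h Real.pi_ne_zero
  exact_mod_cast this

lemma same_index {V : Type*} {n : ℕ} (hn : 1 ≤ n) {ω : V → ℝ × ℝ} {f : V → NOdVert}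
    (h1 : CondC1 n ω f) {x y : V} (hxy : f x = f y) {i i' : ℕ} (hi : i ≤ n) (hi' : i' ≤ n)
    {s t : ℝ} (hs : s ∈ Set.Icc (0 : ℝ) 1) (ht : t ∈ Set.Icc (0 : ℝ) 1)
    (hx : ω x = bpt n i s) (hy : ω y = bpt n i' t) : i = i' := by
  rcases h1 x y hxy with ⟨h, _⟩ | ⟨j, hj, a, ha, b, hb, hx', hy'⟩
  · exact absurd (hx.symm.trans h) (bpt_ne_origin hs.1)
  · have e1 : i = j := bpt_index_eq hn hi hj hs.1 ha.1 (hx.symm.trans hx')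
    have e2 : i' = j := bpt_index_eq hn hi' hj ht.1 hb.1 (hy.symm.trans hy')
    omega

lemma nodAdj_symm {n : ℕ} {X Y : NOdVert} (h : nodAdj n X Y) : nodAdj n Y X := by
  obtain ⟨ℓ, j, h1, h2, hc⟩ := h
  exact ⟨ℓ, j, h1, h2, hc.symm⟩

lemma nod_neighbor {n L J : ℕ} {Y : NOdVert}
    (h : nodAdj n (NOdVert.node L J) Y) :
    1 ≤ J ∧ (Y = cv L (J - 1) ∨ Y = NOdVert.node L (J + 1)) := by
  obtain ⟨ℓ, j, h1, h2, hc⟩ := h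
  rcases hc with ⟨ha, hb⟩ | ⟨hb, ha⟩
  · -- node L J = cv ℓ j, Y = cv ℓ (j+1)
    by_cases hj : j = 0
    · simp [cv, hj] at ha
    · simp [cv, hj] at ha
      obtain ⟨hL, hJ⟩ := ha
      refine ⟨by omega, Or.inr ?_⟩
      rw [hb]
      simp [cv, hL, hJ]
  · -- node L J = cv ℓ (j+1), Y = cv ℓ j
    simp [cv] at ha
    obtain ⟨hL, hJ⟩ := ha
    refine ⟨by omega, Or.inl ?_⟩
    rw [hb, hL]
    congr 1
    omega

theorem stmt8 {V : Type*} (n : ℕ) (hn : 2 ≤ n) (G : SimpleGraph V)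
    (ω : V → ℝ × ℝ) (hω : IsPlacement n G ω)
    (f : V → NOdVert) (h1 : CondC1 n ω f) (h2 : CondC2 n G f)
    (u v : ℕ → V) (k₁ k₂ : ℕ)
    (hu : IsWrapping n G ω u k₁) (hv : IsWrapping n G ω v k₂)
    (p₁ p₂ : ℕ) (ho₁ : p₁ % 2 = 1) (ho₂ : p₂ % 2 = 1)
    (hp₁ : 1 ≤ p₁) (hp₁k : p₁ + 1 ≤ k₁) (hp₂ : 1 ≤ p₂) (hp₂k : p₂ + 1 ≤ k₂)
    (heq : f (u p₁) = f (v p₂)) (hne : f (u p₁) ≠ NOdVert.branch) :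
    f (u (p₁ - 1)) = f (v (p₂ - 1)) ∧ f (u (p₁ + 1)) = f (v (p₂ + 1)) := by
  obtain ⟨-, -, huadj, hueven, -⟩ := hu
  obtain ⟨-, -, hvadj, hveven, -⟩ := hv
  set q₁ := p₁ / 2 with hq₁def
  set q₂ := p₂ / 2 with hq₂def
  have hq₁ : p₁ = 2 * q₁ + 1 := by omega
  have hq₂ : p₂ = 2 * q₂ + 1 := by omega
  have hn1 : 1 ≤ n := by omega
  -- ω facts
  obtain ⟨sA, hsA, hωA⟩ := hueven q₁ (by omega)
  obtain ⟨sB, hsB, hωB⟩ := hueven (q₁ + 1) (by omega)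
  obtain ⟨sC, hsC, hωC⟩ := hveven q₂ (by omega)
  obtain ⟨sD, hsD, hωD⟩ := hveven (q₂ + 1) (by omega)
  have e1 : 2 * q₁ = p₁ - 1 := by omega
  have e2 : 2 * (q₁ + 1) = p₁ + 1 := by omega
  have e3 : 2 * q₂ = p₂ - 1 := by omega
  have e4 : 2 * (q₂ + 1) = p₂ + 1 := by omega
  rw [e1] at hωA; rw [e2] at hωB; rw [e3] at hωC; rw [e4] at hωD
  have hb1 : q₁ % (n + 1) ≤ n := Nat.le_of_lt_succ (Nat.mod_lt _ (Nat.succ_pos n))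
  have hb2 : (q₁ + 1) % (n + 1) ≤ n := Nat.le_of_lt_succ (Nat.mod_lt _ (Nat.succ_pos n))
  have hb3 : q₂ % (n + 1) ≤ n := Nat.le_of_lt_succ (Nat.mod_lt _ (Nat.succ_pos n))
  have hb4 : (q₂ + 1) % (n + 1) ≤ n := Nat.le_of_lt_succ (Nat.mod_lt _ (Nat.succ_pos n))
  -- adjacency facts, pushed through f
  have adjA : nodAdj n (f (u p₁)) (f (u (p₁ - 1))) := by
    have := h2 _ _ (huadj (p₁ - 1) (by omega))
    rw [Nat.sub_add_cancel hp₁] at this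
    exact nodAdj_symm this
  have adjB : nodAdj n (f (u p₁)) (f (u (p₁ + 1))) := h2 _ _ (huadj p₁ (by omega))
  have adjC : nodAdj n (f (v p₂)) (f (v (p₂ - 1))) := by
    have := h2 _ _ (hvadj (p₂ - 1) (by omega))
    rw [Nat.sub_add_cancel hp₂] at this
    exact nodAdj_symm this
  have adjD : nodAdj n (f (v p₂)) (f (v (p₂ + 1))) := h2 _ _ (hvadj p₂ (by omega))
  obtain hfp | ⟨L, J, hfp⟩ : f (u p₁) = NOdVert.branch ∨ ∃ L J, f (u p₁) = NOdVert.node L J := by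
    cases h : f (u p₁) with
    | branch => exact Or.inl rfl
    | node a b => exact Or.inr ⟨a, b, rfl⟩
  · exact absurd hfp hne
  rw [hfp] at adjA adjB
  rw [← heq, hfp] at adjC adjD
  obtain ⟨-, mA⟩ := nod_neighbor adjA
  obtain ⟨-, mB⟩ := nod_neighbor adjB
  obtain ⟨-, mC⟩ := nod_neighbor adjC
  obtain ⟨-, mD⟩ := nod_neighbor adjD
  -- distinctness within each pattern
  have hAB : f (u (p₁ - 1)) ≠ f (u (p₁ + 1)) := by
    intro h
    have hidx := same_index hn1 h1 h hb1 hb2 hsA hsB hωA hωB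
    have : (n + 1) ∣ (q₁ + 1) - q₁ :=
      (Nat.modEq_iff_dvd' (Nat.le_succ q₁)).mp hidx
    have := Nat.le_of_dvd (by omega) this
    omega
  have hCD : f (v (p₂ - 1)) ≠ f (v (p₂ + 1)) := by
    intro h
    have hidx := same_index hn1 h1 h hb3 hb4 hsC hsD hωC hωD
    have : (n + 1) ∣ (q₂ + 1) - q₂ :=
      (Nat.modEq_iff_dvd' (Nat.le_succ q₂)).mp hidx
    have := Nat.le_of_dvd (by omega) this
    omega
  -- the crossed case is impossible
  have key : f (u (p₁ - 1)) = f (v (p₂ + 1)) → f (u (p₁ + 1)) = f (v (p₂ - 1)) → False := by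
    intro hAD hBC
    have i1 : Nat.ModEq (n + 1) q₁ (q₂ + 1) :=
      same_index hn1 h1 hAD hb1 hb4 hsA hsD hωA hωD
    have i2 : Nat.ModEq (n + 1) (q₁ + 1) q₂ :=
      same_index hn1 h1 hBC hb2 hb3 hsB hsC hωB hωC
    have i3 : Nat.ModEq (n + 1) q₂ (q₂ + 2) := i2.symm.trans (i1.add_right 1)
    have : (n + 1) ∣ (q₂ + 2) - q₂ := (Nat.modEq_iff_dvd' (by omega)).mp i3
    have := Nat.le_of_dvd (by omega) this
    omega
  rcases mA with hA | hA <;> rcases mB with hB | hB <;>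
    rcases mC with hC | hC <;> rcases mD with hD | hD <;>
    first
      | exact ⟨hA.trans hC.symm, hB.trans hD.symm⟩
      | exact absurd (hA.trans hB.symm) hAB
      | exact absurd (hC.trans hD.symm) hCD
      | exact (key (hA.trans hD.symm) (hB.trans hC.symm)).elim
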